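/- arXiv:math/0407218 — 3 statements merged into one kernel-verified Lean document; each statement's English description precedes it below -/
import Mathlib

section
/- In H_{n,r}(0), for every 1 ≤ i ≤ n−1 and every color word c ∈ C^n one has: T_i L_c = L_{cσ_i} T_i − L_c if c_i < c_{i+1}; T_i L_c = L_c T_i if c_i = c_{i+1}; and T_i L_c = L_{cσ_i} T_i + L_{cσ_i} if c_i > c_{i+1}. Here cσ_i denotes the word obtained from c by exchanging c_i and c_{i+1}. -/
noncomputable section

open Polynomial

namespace AKS0

/-- Generators: `Sum.inl i` is `T_{i+1}` (0-indexed `T_i`, acting on positions `i, i+1`),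
`Sum.inr j` is `ξ_{j+1}` (0-indexed `ξ_j`). -/
abbrev Gen (n : ℕ) : Type := Fin (n - 1) ⊕ Fin n

abbrev FreeAKS (n : ℕ) : Type := FreeAlgebra ℂ (Gen n)

def tGen (n : ℕ) (i : Fin (n - 1)) : FreeAKS n := FreeAlgebra.ι ℂ (Sum.inl i)

def xGen (n : ℕ) (j : Fin n) : FreeAKS n := FreeAlgebra.ι ℂ (Sum.inr j)

/-- The position `i` of `Fin (n-1)`, viewed in `Fin n`. -/
def idx0 (n : ℕ) (i : Fin (n - 1)) : Fin n := ⟨i.1, by have := i.2; omega⟩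

/-- The position `i+1` of `Fin n`, for `i : Fin (n-1)`. -/
def idx1 (n : ℕ) (i : Fin (n - 1)) : Fin n := ⟨i.1 + 1, by have := i.2; omega⟩

/-- The Lagrange polynomial `P_k(X) = ∏_{l ≠ k} (X - u_l)/(u_k - u_l)`. -/
def lagPoly (r : ℕ) (u : Fin r → ℂ) (k : Fin r) : ℂ[X] :=
  ∏ l ∈ Finset.univ.erase k, (C ((u k - u l)⁻¹) * (X - C (u l)))

/-- The defining relations of the Ariki-Koike-Shoji algebra `H_{n,r}(q)`. -/
inductive Rel (n r : ℕ) (u : Fin r → ℂ) (q : ℂ) : FreeAKS n → FreeAKS n → Prop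
  | quad (i : Fin (n - 1)) :
      Rel n r u q ((tGen n i - algebraMap ℂ (FreeAKS n) q) * (tGen n i + 1)) 0
  | braid (i j : Fin (n - 1)) (h : (j : ℕ) = (i : ℕ) + 1) :
      Rel n r u q (tGen n i * tGen n j * tGen n i) (tGen n j * tGen n i * tGen n j)
  | commTT (i j : Fin (n - 1)) (h : (i : ℕ) + 2 ≤ (j : ℕ) ∨ (j : ℕ) + 2 ≤ (i : ℕ)) :
      Rel n r u q (tGen n i * tGen n j) (tGen n j * tGen n i)
  | xPoly (j : Fin n) :
      Rel n r u q (Polynomial.aeval (xGen n j) (∏ l : Fin r, (X - C (u l)))) 0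
  | commXX (i j : Fin n) :
      Rel n r u q (xGen n i * xGen n j) (xGen n j * xGen n i)
  | cross (i : Fin (n - 1)) :
      Rel n r u q (tGen n i * xGen n (idx0 n i))
        (xGen n (idx1 n i) * tGen n i -
          (q - 1) • ∑ p ∈ Finset.univ.filter (fun p : Fin r × Fin r => p.1 < p.2),
            (u p.2 - u p.1) •
              (Polynomial.aeval (xGen n (idx0 n i)) (lagPoly r u p.1) *
                Polynomial.aeval (xGen n (idx1 n i)) (lagPoly r u p.2)))
  | sumComm (i : Fin (n - 1)) :
      Rel n r u q (tGen n i * (xGen n (idx1 n i) + xGen n (idx0 n i)))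
        ((xGen n (idx1 n i) + xGen n (idx0 n i)) * tGen n i)
  | commTX (i : Fin (n - 1)) (j : Fin n) (h : j ≠ idx0 n i) (h' : j ≠ idx1 n i) :
      Rel n r u q (tGen n i * xGen n j) (xGen n j * tGen n i)

/-- The Ariki-Koike-Shoji algebra `H_{n,r}(q)` (Shoji's presentation, normalized). -/
abbrev AKSAlg (n r : ℕ) (u : Fin r → ℂ) (q : ℂ) : Type := RingQuot (Rel n r u q)

/-- The generator `T_i` in `H_{n,r}(q)`. -/
def Ti (n r : ℕ) (u : Fin r → ℂ) (q : ℂ) (i : Fin (n - 1)) : AKSAlg n r u q :=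
  RingQuot.mkAlgHom ℂ (Rel n r u q) (tGen n i)

/-- The generator `ξ_j` in `H_{n,r}(q)`. -/
def Xi (n r : ℕ) (u : Fin r → ℂ) (q : ℂ) (j : Fin n) : AKSAlg n r u q :=
  RingQuot.mkAlgHom ℂ (Rel n r u q) (xGen n j)

/-- `L_c = P_{c_1}(ξ_1) ⋯ P_{c_n}(ξ_n)`. -/
def Lc (n r : ℕ) (u : Fin r → ℂ) (q : ℂ) (c : Fin n → Fin r) : AKSAlg n r u q :=
  (List.ofFn fun j : Fin n => Polynomial.aeval (Xi n r u q j) (lagPoly r u (c j))).prod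

end AKS0

namespace AKS0

/-- The color word `cσ_i`, obtained from `c` by exchanging `c_i` and `c_{i+1}`. -/
def swapWord (n r : ℕ) (c : Fin n → Fin r) (i : Fin (n - 1)) : Fin n → Fin r :=
  c ∘ Equiv.swap (idx0 n i) (idx1 n i)

section Aux

variable {n r : ℕ} {u : Fin r → ℂ}

/-! ### Polynomial lemmas -/

lemma lagPoly_eq_basis (a : Fin r) : lagPoly r u a = Lagrange.basis Finset.univ u a := rfl

lemma lagPoly_eq (a : Fin r) :
    lagPoly r u a = C (∏ l ∈ Finset.univ.erase a, (u a - u l)⁻¹) *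
      ∏ l ∈ Finset.univ.erase a, (X - C (u l)) := by
  rw [lagPoly, Finset.prod_mul_distrib, map_prod]

lemma prod_eq_mul (a : Fin r) :
    (∏ l : Fin r, (X - C (u l))) =
      (X - C (u a)) * ∏ l ∈ Finset.univ.erase a, (X - C (u l)) :=
  (Finset.mul_prod_erase _ _ (Finset.mem_univ a)).symm

lemma prod_dvd_X_sub_C_mul_lagPoly (a : Fin r) :
    (∏ l : Fin r, (X - C (u l))) ∣ (X - C (u a)) * lagPoly r u a := by
  rw [lagPoly_eq, prod_eq_mul a]
  exact mul_dvd_mul dvd_rfl (dvd_mul_left _ _)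

lemma prod_dvd_lagPoly_mul_ne {a b : Fin r} (hab : a ≠ b) :
    (∏ l : Fin r, (X - C (u l))) ∣ lagPoly r u a * lagPoly r u b := by
  rw [prod_eq_mul a, mul_comm (lagPoly r u a)]
  refine mul_dvd_mul ?_ ?_
  · have hmem : a ∈ Finset.univ.erase b := Finset.mem_erase.mpr ⟨hab, Finset.mem_univ a⟩
    refine dvd_trans ?_ (Finset.dvd_prod_of_mem (fun l => C ((u b - u l)⁻¹) * (X - C (u l))) hmem)
    exact dvd_mul_left _ _
  · rw [lagPoly_eq]; exact dvd_mul_left _ _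

lemma prod_dvd_lagPoly_sq (hu : Function.Injective u) (a : Fin r) :
    (∏ l : Fin r, (X - C (u l))) ∣ lagPoly r u a * lagPoly r u a - lagPoly r u a := by
  have h1 : lagPoly r u a * lagPoly r u a - lagPoly r u a
      = (lagPoly r u a - 1) * lagPoly r u a := by ring
  rw [h1, prod_eq_mul a]
  refine mul_dvd_mul ?_ ?_
  · rw [dvd_iff_isRoot]
    have := Lagrange.eval_basis_self (s := Finset.univ) (v := u) hu.injOn (Finset.mem_univ a)
    simp [IsRoot, lagPoly_eq_basis, this]
  · rw [lagPoly_eq]; exact dvd_mul_left _ _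

lemma sum_lagPoly (hu : Function.Injective u) (hr : 1 ≤ r) :
    ∑ k : Fin r, lagPoly r u k = 1 := by
  have : Nonempty (Fin r) := ⟨⟨0, hr⟩⟩
  simp only [lagPoly_eq_basis]
  exact Lagrange.sum_basis hu.injOn Finset.univ_nonempty

/-! ### Commuting lemmas for `aeval` -/

lemma commute_aeval_left {A : Type*} [Semiring A] [Algebra ℂ A] {s t : A}
    (h : Commute s t) (p : ℂ[X]) : Commute (aeval s p) t := by
  induction p using Polynomial.induction_on' with
  | add p q hp hq => rw [map_add]; exact hp.add_left hq
  | monomial m a =>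
      rw [aeval_monomial]
      exact (Algebra.commute_algebraMap_left a t).mul_left (h.pow_left m)

lemma commute_aeval_aeval {A : Type*} [Semiring A] [Algebra ℂ A] {s t : A}
    (h : Commute s t) (p q : ℂ[X]) : Commute (aeval s p) (aeval t q) :=
  (commute_aeval_left (commute_aeval_left h p).symm q).symm

/-! ### Basic algebra elements -/

/-- `P_k(ξ_j)` in `H_{n,r}(0)`. -/
def Pj (n r : ℕ) (u : Fin r → ℂ) (j : Fin n) (k : Fin r) : AKSAlg n r u 0 :=
  aeval (Xi n r u 0 j) (lagPoly r u k)

/-- `e_{ab} = P_a(ξ_i) P_b(ξ_{i+1})`. -/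
def el (n r : ℕ) (u : Fin r → ℂ) (i : Fin (n - 1)) (a b : Fin r) : AKSAlg n r u 0 :=
  Pj n r u (idx0 n i) a * Pj n r u (idx1 n i) b

/-- `S = ∑_{a<b} (u_b - u_a) e_{ab}`. -/
def Sel (n r : ℕ) (u : Fin r → ℂ) (i : Fin (n - 1)) : AKSAlg n r u 0 :=
  ∑ p ∈ Finset.univ.filter (fun p : Fin r × Fin r => p.1 < p.2),
    (u p.2 - u p.1) • el n r u i p.1 p.2

lemma aeval_Xi_prod (j : Fin n) :
    aeval (Xi n r u 0 j) (∏ l : Fin r, (X - C (u l))) = 0 := by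
  have h := RingQuot.mkAlgHom_rel ℂ (Rel.xPoly (n := n) (u := u) (q := 0) j)
  rw [map_zero, ← Polynomial.aeval_algHom_apply] at h
  exact h

lemma aeval_Xi_dvd {p : ℂ[X]} (j : Fin n) (h : (∏ l : Fin r, (X - C (u l))) ∣ p) :
    aeval (Xi n r u 0 j) p = 0 := by
  obtain ⟨s, rfl⟩ := h
  rw [map_mul, aeval_Xi_prod, zero_mul]

lemma Pj_orth (hu : Function.Injective u) (j : Fin n) (a b : Fin r) :
    Pj n r u j a * Pj n r u j b = if a = b then Pj n r u j a else 0 := by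
  by_cases hab : a = b
  · subst hab
    rw [if_pos rfl]
    have h := aeval_Xi_dvd j (prod_dvd_lagPoly_sq hu a)
    rw [map_sub, map_mul] at h
    exact sub_eq_zero.mp h
  · rw [if_neg hab, Pj, Pj, ← map_mul]
    exact aeval_Xi_dvd j (prod_dvd_lagPoly_mul_ne hab)

lemma Pj_sum (hu : Function.Injective u) (hr : 1 ≤ r) (j : Fin n) :
    ∑ k : Fin r, Pj n r u j k = 1 := by
  simp only [Pj, ← map_sum]
  rw [sum_lagPoly hu hr, map_one]

lemma Xi_mul_Pj (j : Fin n) (k : Fin r) :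
    Xi n r u 0 j * Pj n r u j k = u k • Pj n r u j k := by
  have h0 := aeval_Xi_dvd j (prod_dvd_X_sub_C_mul_lagPoly (u := u) k)
  rw [map_mul, map_sub, aeval_X, aeval_C, sub_mul, sub_eq_zero] at h0
  rw [Pj, h0, ← Algebra.smul_def]

lemma commute_Xi (j j' : Fin n) : Commute (Xi n r u 0 j) (Xi n r u 0 j') := by
  have h := RingQuot.mkAlgHom_rel ℂ (Rel.commXX (n := n) (u := u) (q := 0) j j')
  rw [map_mul, map_mul] at h
  exact h

lemma commute_Ti_Xi (i : Fin (n - 1)) {j : Fin n} (h0 : j ≠ idx0 n i) (h1 : j ≠ idx1 n i) :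
    Commute (Ti n r u 0 i) (Xi n r u 0 j) := by
  have h := RingQuot.mkAlgHom_rel ℂ (Rel.commTX (u := u) (q := 0) i j h0 h1)
  rw [map_mul, map_mul] at h
  exact h

lemma commute_Pj_Pj (j j' : Fin n) (a b : Fin r) :
    Commute (Pj n r u j a) (Pj n r u j' b) :=
  commute_aeval_aeval (commute_Xi j j') _ _

lemma commute_Xi_Pj (j j' : Fin n) (k : Fin r) :
    Commute (Xi n r u 0 j) (Pj n r u j' k) :=
  (commute_aeval_left (commute_Xi j' j) _).symm

lemma commute_Ti_Pj (i : Fin (n - 1)) {j : Fin n} (h0 : j ≠ idx0 n i) (h1 : j ≠ idx1 n i)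
    (k : Fin r) : Commute (Ti n r u 0 i) (Pj n r u j k) :=
  (commute_aeval_left (commute_Ti_Xi i h0 h1).symm _).symm

lemma commute_Xi_el (i : Fin (n - 1)) (j : Fin n) (a b : Fin r) :
    Commute (Xi n r u 0 j) (el n r u i a b) :=
  (commute_Xi_Pj j _ a).mul_right (commute_Xi_Pj j _ b)

/-! ### The cross relations at `q = 0` -/

lemma Ti_mul_Xi0 (i : Fin (n - 1)) :
    Ti n r u 0 i * Xi n r u 0 (idx0 n i) =
      Xi n r u 0 (idx1 n i) * Ti n r u 0 i + Sel n r u i := by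
  have h := RingQuot.mkAlgHom_rel ℂ (Rel.cross (u := u) (q := 0) i)
  simp only [map_mul, map_add, map_sub, map_sum, map_smul, ← Polynomial.aeval_algHom_apply,
    zero_sub, neg_smul, one_smul, sub_neg_eq_add] at h
  simpa only [Sel, el, Pj, Ti, Xi] using h

lemma Ti_mul_Xi1 (i : Fin (n - 1)) :
    Ti n r u 0 i * Xi n r u 0 (idx1 n i) =
      Xi n r u 0 (idx0 n i) * Ti n r u 0 i - Sel n r u i := by
  have hs := RingQuot.mkAlgHom_rel ℂ (Rel.sumComm (u := u) (q := 0) i)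
  simp only [map_mul, map_add] at hs
  have h2 : Ti n r u 0 i * Xi n r u 0 (idx1 n i) + Ti n r u 0 i * Xi n r u 0 (idx0 n i)
      = Xi n r u 0 (idx1 n i) * Ti n r u 0 i + Xi n r u 0 (idx0 n i) * Ti n r u 0 i := by
    rw [← mul_add, ← add_mul]; exact hs
  have h0 := Ti_mul_Xi0 (u := u) i
  calc Ti n r u 0 i * Xi n r u 0 (idx1 n i)
      = (Ti n r u 0 i * Xi n r u 0 (idx1 n i) + Ti n r u 0 i * Xi n r u 0 (idx0 n i))
        - Ti n r u 0 i * Xi n r u 0 (idx0 n i) := by abel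
    _ = (Xi n r u 0 (idx1 n i) * Ti n r u 0 i + Xi n r u 0 (idx0 n i) * Ti n r u 0 i)
        - (Xi n r u 0 (idx1 n i) * Ti n r u 0 i + Sel n r u i) := by rw [h2, h0]
    _ = Xi n r u 0 (idx0 n i) * Ti n r u 0 i - Sel n r u i := by abel

/-! ### Idempotent lemmas -/

lemma el_orth (hu : Function.Injective u) (i : Fin (n - 1)) (a b c d : Fin r) :
    el n r u i a b * el n r u i c d = if a = c ∧ b = d then el n r u i c d else 0 := by
  have hcomm := (commute_Pj_Pj (u := u) (idx1 n i) (idx0 n i) b c).eq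
  have key : el n r u i a b * el n r u i c d
      = (Pj n r u (idx0 n i) a * Pj n r u (idx0 n i) c) *
        (Pj n r u (idx1 n i) b * Pj n r u (idx1 n i) d) := by
    unfold el
    rw [mul_assoc, ← mul_assoc (Pj n r u (idx1 n i) b), hcomm, mul_assoc, ← mul_assoc]
  rw [key, Pj_orth hu, Pj_orth hu]
  by_cases hac : a = c <;> by_cases hbd : b = d <;>
    simp [hac, hbd, el]

lemma el_sum (hu : Function.Injective u) (hr : 1 ≤ r) (i : Fin (n - 1)) :
    ∑ p : Fin r × Fin r, el n r u i p.1 p.2 = 1 := by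
  rw [Fintype.sum_prod_type]
  simp only [el, ← Finset.mul_sum]
  rw [← Finset.sum_mul, Pj_sum hu hr, Pj_sum hu hr, one_mul]

lemma Xi0_mul_el (i : Fin (n - 1)) (a b : Fin r) :
    Xi n r u 0 (idx0 n i) * el n r u i a b = u a • el n r u i a b := by
  unfold el
  rw [← mul_assoc, Xi_mul_Pj, smul_mul_assoc]

lemma el_mul_Xi1 (i : Fin (n - 1)) (a b : Fin r) :
    el n r u i a b * Xi n r u 0 (idx1 n i) = u b • el n r u i a b := by
  rw [← (commute_Xi_el i (idx1 n i) a b).eq]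
  unfold el
  rw [← mul_assoc, (commute_Xi_Pj (idx1 n i) (idx0 n i) a).eq, mul_assoc, Xi_mul_Pj,
    mul_smul_comm]

lemma Sel_mul_el (hu : Function.Injective u) (i : Fin (n - 1)) (a b : Fin r) :
    Sel n r u i * el n r u i a b
      = (if a < b then u b - u a else 0) • el n r u i a b := by
  unfold Sel
  rw [Finset.sum_mul]
  simp only [smul_mul_assoc]
  by_cases hab : a < b
  · rw [Finset.sum_eq_single_of_mem (a, b) (by simp [hab])]
    · rw [el_orth hu, if_pos ⟨rfl, rfl⟩, if_pos hab]
    · intro p _ hne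
      rw [el_orth hu, if_neg, smul_zero]
      rintro ⟨h1, h2⟩
      exact hne (Prod.ext h1 h2)
  · rw [if_neg hab, zero_smul]
    refine Finset.sum_eq_zero fun p hp => ?_
    rw [el_orth hu, if_neg, smul_zero]
    rintro ⟨h1, h2⟩
    rw [Finset.mem_filter] at hp
    exact hab (h1 ▸ h2 ▸ hp.2)

end Aux
section Blocks

variable {n r : ℕ} {u : Fin r → ℂ}

lemma smul_cancel {α : ℂ} (hα : α ≠ 0) {x : AKSAlg n r u 0} (h : α • x = 0) : x = 0 := by
  have h2 := congrArg (fun z => α⁻¹ • z) h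
  simpa [smul_smul, inv_mul_cancel₀ hα] using h2

lemma smul_shift {α β : ℂ} (hα : α ≠ 0) {x y : AKSAlg n r u 0} (h : α • x = β • y) :
    x = (α⁻¹ * β) • y := by
  have h2 := congrArg (fun z => α⁻¹ • z) h
  simpa [smul_smul, inv_mul_cancel₀ hα] using h2

/-- The key identity `u_c • E = u_{d'} • E + s_{cd} • δ` coming from `T ξ_i = ξ_{i+1} T + S`. -/
lemma E1 (hu : Function.Injective u) (i : Fin (n - 1)) (c' d' c d : Fin r) :
    (u c - u d') • (el n r u i c' d' * (Ti n r u 0 i * el n r u i c d))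
      = (if c < d then u d - u c else 0) •
          (if c' = c ∧ d' = d then el n r u i c d else 0) := by
  set T := Ti n r u 0 i
  set E := el n r u i c' d' * (T * el n r u i c d) with hE
  have hQ : el n r u i c' d' * (T * (Xi n r u 0 (idx0 n i) * el n r u i c d))
      = u c • E := by
    rw [Xi0_mul_el, mul_smul_comm, mul_smul_comm]
  have hQ' : el n r u i c' d' * (T * (Xi n r u 0 (idx0 n i) * el n r u i c d))
      = u d' • E + (if c < d then u d - u c else 0) •
          (if c' = c ∧ d' = d then el n r u i c d else 0) := by
    calc el n r u i c' d' * (T * (Xi n r u 0 (idx0 n i) * el n r u i c d))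
        = el n r u i c' d' * ((T * Xi n r u 0 (idx0 n i)) * el n r u i c d) := by
          rw [mul_assoc]
      _ = el n r u i c' d' *
            ((Xi n r u 0 (idx1 n i) * T + Sel n r u i) * el n r u i c d) := by
          rw [Ti_mul_Xi0]
      _ = (el n r u i c' d' * Xi n r u 0 (idx1 n i)) * (T * el n r u i c d)
            + el n r u i c' d' * (Sel n r u i * el n r u i c d) := by
          simp only [add_mul, mul_add, mul_assoc]
      _ = u d' • E + (if c < d then u d - u c else 0) •
            (if c' = c ∧ d' = d then el n r u i c d else 0) := by
          rw [el_mul_Xi1, Sel_mul_el hu, smul_mul_assoc, mul_smul_comm, el_orth hu, hE]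
  have hcomb := hQ.symm.trans hQ'
  have hsub : (u c - u d') • E = u c • E - u d' • E := by module
  rw [hsub, hcomb]
  abel

/-- The key identity from `T ξ_{i+1} = ξ_i T − S`. -/
lemma E2 (hu : Function.Injective u) (i : Fin (n - 1)) (c' d' c d : Fin r) :
    (u d - u c') • (el n r u i c' d' * (Ti n r u 0 i * el n r u i c d))
      = -((if c < d then u d - u c else 0) •
          (if c' = c ∧ d' = d then el n r u i c d else 0)) := by
  set T := Ti n r u 0 i
  set E := el n r u i c' d' * (T * el n r u i c d) with hE
  have hX1 : Xi n r u 0 (idx1 n i) * el n r u i c d = u d • el n r u i c d := by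
    rw [(commute_Xi_el i (idx1 n i) c d).eq, el_mul_Xi1]
  have hel_X0 : el n r u i c' d' * Xi n r u 0 (idx0 n i) = u c' • el n r u i c' d' := by
    rw [← (commute_Xi_el i (idx0 n i) c' d').eq, Xi0_mul_el]
  have hQ : el n r u i c' d' * (T * (Xi n r u 0 (idx1 n i) * el n r u i c d))
      = u d • E := by
    rw [hX1, mul_smul_comm, mul_smul_comm]
  have hQ' : el n r u i c' d' * (T * (Xi n r u 0 (idx1 n i) * el n r u i c d))
      = u c' • E - (if c < d then u d - u c else 0) •
          (if c' = c ∧ d' = d then el n r u i c d else 0) := by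
    calc el n r u i c' d' * (T * (Xi n r u 0 (idx1 n i) * el n r u i c d))
        = el n r u i c' d' * ((T * Xi n r u 0 (idx1 n i)) * el n r u i c d) := by
          rw [mul_assoc]
      _ = el n r u i c' d' *
            ((Xi n r u 0 (idx0 n i) * T - Sel n r u i) * el n r u i c d) := by
          rw [Ti_mul_Xi1]
      _ = (el n r u i c' d' * Xi n r u 0 (idx0 n i)) * (T * el n r u i c d)
            - el n r u i c' d' * (Sel n r u i * el n r u i c d) := by
          simp only [sub_mul, mul_sub, mul_assoc]
      _ = u c' • E - (if c < d then u d - u c else 0) •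
            (if c' = c ∧ d' = d then el n r u i c d else 0) := by
          rw [hel_X0, Sel_mul_el hu, smul_mul_assoc, mul_smul_comm, el_orth hu, hE]
  have hcomb := hQ.symm.trans hQ'
  have hsub : (u d - u c') • E = u d • E - u c' • E := by module
  rw [hsub, hcomb]
  abel

lemma E_offdiag (hu : Function.Injective u) (i : Fin (n - 1)) {c' d' c d : Fin r}
    (hne : ¬(c' = c ∧ d' = d)) (hswap : ¬(c' = d ∧ d' = c)) :
    el n r u i c' d' * (Ti n r u 0 i * el n r u i c d) = 0 := by
  by_cases hd : d' = c
  · have hcd : c' ≠ d := fun h => hswap ⟨h, hd⟩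
    have h2 := E2 hu i c' d' c d
    rw [if_neg hne, smul_zero, neg_zero] at h2
    exact smul_cancel (sub_ne_zero.mpr fun h => hcd (hu h).symm) h2
  · have h1 := E1 hu i c' d' c d
    rw [if_neg hne, smul_zero] at h1
    exact smul_cancel (sub_ne_zero.mpr fun h => hd (hu h).symm) h1

lemma E_diag_lt (hu : Function.Injective u) (i : Fin (n - 1)) {a b : Fin r} (hab : a < b) :
    el n r u i a b * (Ti n r u 0 i * el n r u i a b) = -el n r u i a b := by
  have h1 := E1 hu i a b a b
  rw [if_pos hab, if_pos ⟨rfl, rfl⟩] at h1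
  have hne : u a - u b ≠ 0 := sub_ne_zero.mpr fun h => (ne_of_lt hab) (hu h)
  have := smul_shift hne h1
  rw [this, show (u a - u b)⁻¹ * (u b - u a) = -1 by
    rw [show u b - u a = -(u a - u b) by ring, mul_neg, inv_mul_cancel₀ hne]]
  module

lemma E_diag_not_lt (hu : Function.Injective u) (i : Fin (n - 1)) {a b : Fin r}
    (hab : ¬a < b) (hne : a ≠ b) :
    el n r u i a b * (Ti n r u 0 i * el n r u i a b) = 0 := by
  have h1 := E1 hu i a b a b
  rw [if_neg hab, zero_smul] at h1
  exact smul_cancel (sub_ne_zero.mpr fun h => hne (hu h)) h1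

lemma sum_two {M : Type*} [AddCommMonoid M] {ι : Type*} [Fintype ι] [DecidableEq ι]
    {x y : ι} (hxy : x ≠ y) (f : ι → M) (h : ∀ p, p ≠ x → p ≠ y → f p = 0) :
    ∑ p, f p = f x + f y := by
  rw [← Finset.sum_pair hxy]
  refine (Finset.sum_subset (Finset.subset_univ _) fun p _ hp => ?_).symm
  simp only [Finset.mem_insert, Finset.mem_singleton, not_or] at hp
  exact h p hp.1 hp.2

lemma Ti_mul_el_expand (hu : Function.Injective u) (hr : 1 ≤ r) (i : Fin (n - 1))
    (a b : Fin r) :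
    Ti n r u 0 i * el n r u i a b
      = ∑ p : Fin r × Fin r, el n r u i p.1 p.2 * (Ti n r u 0 i * el n r u i a b) := by
  rw [← Finset.sum_mul, el_sum hu hr, one_mul]

lemma el_mul_Ti_expand (hu : Function.Injective u) (hr : 1 ≤ r) (i : Fin (n - 1))
    (a b : Fin r) :
    el n r u i a b * Ti n r u 0 i
      = ∑ p : Fin r × Fin r, el n r u i a b * (Ti n r u 0 i * el n r u i p.1 p.2) := by
  simp only [← mul_assoc, ← Finset.mul_sum]
  rw [el_sum hu hr, mul_one]

lemma Ti_el_of_lt (hu : Function.Injective u) (hr : 1 ≤ r) (i : Fin (n - 1))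
    {a b : Fin r} (hab : a < b) :
    Ti n r u 0 i * el n r u i a b
      = el n r u i b a * Ti n r u 0 i - el n r u i a b := by
  have hne : a ≠ b := ne_of_lt hab
  have hpair : ((b, a) : Fin r × Fin r) ≠ (a, b) :=
    fun h => hne (congrArg Prod.snd h)
  have hL : Ti n r u 0 i * el n r u i a b
      = el n r u i b a * (Ti n r u 0 i * el n r u i a b) +
        el n r u i a b * (Ti n r u 0 i * el n r u i a b) := by
    conv_lhs => rw [Ti_mul_el_expand hu hr]
    exact sum_two hpair _ fun p h1 h2 =>
      E_offdiag hu i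
        (fun hc => h2 (Prod.ext hc.1 hc.2))
        (fun hc => h1 (Prod.ext hc.1 hc.2))
  have hR : el n r u i b a * Ti n r u 0 i
      = el n r u i b a * (Ti n r u 0 i * el n r u i a b) +
        el n r u i b a * (Ti n r u 0 i * el n r u i b a) := by
    conv_lhs => rw [el_mul_Ti_expand hu hr]
    exact sum_two hpair.symm _ fun p h1 h2 =>
      E_offdiag hu i
        (fun hc => h2 (Prod.ext hc.1.symm hc.2.symm))
        (fun hc => h1 (Prod.ext hc.2.symm hc.1.symm))
  rw [hL, hR, E_diag_lt hu i hab, E_diag_not_lt hu i (fun h => (lt_asymm hab) h) hne.symm]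
  abel

lemma Ti_el_of_eq (hu : Function.Injective u) (hr : 1 ≤ r) (i : Fin (n - 1)) (a : Fin r) :
    Ti n r u 0 i * el n r u i a a = el n r u i a a * Ti n r u 0 i := by
  have hL : Ti n r u 0 i * el n r u i a a
      = el n r u i a a * (Ti n r u 0 i * el n r u i a a) := by
    conv_lhs => rw [Ti_mul_el_expand hu hr]
    exact Finset.sum_eq_single_of_mem (a, a) (Finset.mem_univ _) fun p _ hp =>
      E_offdiag hu i
        (fun hc => hp (Prod.ext hc.1 hc.2)) (fun hc => hp (Prod.ext hc.1 hc.2))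
  have hR : el n r u i a a * Ti n r u 0 i
      = el n r u i a a * (Ti n r u 0 i * el n r u i a a) := by
    conv_lhs => rw [el_mul_Ti_expand hu hr]
    exact Finset.sum_eq_single_of_mem (a, a) (Finset.mem_univ _) fun p _ hp =>
      E_offdiag hu i
        (fun hc => hp (Prod.ext hc.1.symm hc.2.symm))
        (fun hc => hp (Prod.ext hc.2.symm hc.1.symm))
  rw [hL, hR]

lemma Ti_el_of_gt (hu : Function.Injective u) (hr : 1 ≤ r) (i : Fin (n - 1))
    {a b : Fin r} (hab : b < a) :
    Ti n r u 0 i * el n r u i a b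
      = el n r u i b a * Ti n r u 0 i + el n r u i b a := by
  have hne : a ≠ b := (ne_of_lt hab).symm
  have hpair : ((b, a) : Fin r × Fin r) ≠ (a, b) :=
    fun h => hne (congrArg Prod.snd h)
  have hL : Ti n r u 0 i * el n r u i a b
      = el n r u i b a * (Ti n r u 0 i * el n r u i a b) +
        el n r u i a b * (Ti n r u 0 i * el n r u i a b) := by
    conv_lhs => rw [Ti_mul_el_expand hu hr]
    exact sum_two hpair _ fun p h1 h2 =>
      E_offdiag hu i
        (fun hc => h2 (Prod.ext hc.1 hc.2))
        (fun hc => h1 (Prod.ext hc.1 hc.2))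
  have hR : el n r u i b a * Ti n r u 0 i
      = el n r u i b a * (Ti n r u 0 i * el n r u i a b) +
        el n r u i b a * (Ti n r u 0 i * el n r u i b a) := by
    conv_lhs => rw [el_mul_Ti_expand hu hr]
    exact sum_two hpair.symm _ fun p h1 h2 =>
      E_offdiag hu i
        (fun hc => h2 (Prod.ext hc.1.symm hc.2.symm))
        (fun hc => h1 (Prod.ext hc.2.symm hc.1.symm))
  rw [hL, hR, E_diag_lt hu i hab, E_diag_not_lt hu i (fun h => (lt_asymm hab) h) hne]
  abel

end Blocks
section Split

lemma ofFn_prod_split {M : Type*} [Monoid M] {n : ℕ} (g : Fin n → M) (m : ℕ)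
    (h : m + 1 < n) :
    (List.ofFn g).prod =
      ((List.ofFn g).take m).prod *
        (g ⟨m, by omega⟩ * (g ⟨m + 1, h⟩ * ((List.ofFn g).drop (m + 2)).prod)) := by
  conv_lhs => rw [← List.take_append_drop m (List.ofFn g)]
  rw [List.prod_append]
  congr 1
  rw [List.drop_eq_getElem_cons (by simp; omega),
    show (List.ofFn g).drop (m + 1) =
        (List.ofFn g)[m + 1]'(by simp; omega) :: (List.ofFn g).drop (m + 2) from
      List.drop_eq_getElem_cons (by simp; omega),
    List.prod_cons, List.prod_cons, List.getElem_ofFn, List.getElem_ofFn]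

end Split
/-- in `H_{n,r}(0)`,
`T_i L_c = L_{cσ_i} T_i − L_c` if `c_i < c_{i+1}`,
`T_i L_c = L_c T_i` if `c_i = c_{i+1}`, and
`T_i L_c = L_{cσ_i} T_i + L_{cσ_i}` if `c_i > c_{i+1}`. -/
theorem Ti_mul_Lc (n r : ℕ) (hn : 1 ≤ n) (hr : 1 ≤ r) (u : Fin r → ℂ)
    (hu : Function.Injective u) (i : Fin (n - 1)) (c : Fin n → Fin r) :
    (c (idx0 n i) < c (idx1 n i) →
      Ti n r u 0 i * Lc n r u 0 c =
        Lc n r u 0 (swapWord n r c i) * Ti n r u 0 i - Lc n r u 0 c) ∧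
    (c (idx0 n i) = c (idx1 n i) →
      Ti n r u 0 i * Lc n r u 0 c = Lc n r u 0 c * Ti n r u 0 i) ∧
    (c (idx1 n i) < c (idx0 n i) →
      Ti n r u 0 i * Lc n r u 0 c =
        Lc n r u 0 (swapWord n r c i) * Ti n r u 0 i + Lc n r u 0 (swapWord n r c i)) := by
  have hm1 : (i : ℕ) + 1 < n := by have := i.2; omega
  set T := Ti n r u 0 i with hT
  -- general decomposition of `Lc`
  have hdec : ∀ w : Fin n → Fin r, Lc n r u 0 w =
      ((List.ofFn fun j => Pj n r u j (w j)).take (i : ℕ)).prod *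
        (Pj n r u (idx0 n i) (w (idx0 n i)) *
          (Pj n r u (idx1 n i) (w (idx1 n i)) *
            ((List.ofFn fun j => Pj n r u j (w j)).drop ((i : ℕ) + 2)).prod)) :=
    fun w => ofFn_prod_split (fun j => Pj n r u j (w j)) (i : ℕ) hm1
  set A := ((List.ofFn fun j => Pj n r u j (c j)).take (i : ℕ)).prod with hA
  set B := ((List.ofFn fun j => Pj n r u j (c j)).drop ((i : ℕ) + 2)).prod with hB
  -- the swapped word has the same outer parts
  have hne0 : ∀ k : ℕ, k ≠ (i : ℕ) → k ≠ (i : ℕ) + 1 → ∀ hk : k < n,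
      swapWord n r c i ⟨k, hk⟩ = c ⟨k, hk⟩ := by
    intro k h0 h1 hk
    have e : Equiv.swap (idx0 n i) (idx1 n i) ⟨k, hk⟩ = ⟨k, hk⟩ :=
      Equiv.swap_apply_of_ne_of_ne (Fin.ne_of_val_ne h0) (Fin.ne_of_val_ne h1)
    simp only [swapWord, Function.comp_apply, e]
  have hAσ : ((List.ofFn fun j => Pj n r u j (swapWord n r c i j)).take (i : ℕ)).prod = A := by
    rw [hA]
    congr 1
    apply List.ext_getElem (by simp)
    intro k h1 h2
    have hklt : k < (i : ℕ) := by
      simp only [List.length_take, List.length_ofFn, lt_min_iff] at h1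
      exact h1.1
    rw [List.getElem_take, List.getElem_take, List.getElem_ofFn, List.getElem_ofFn,
      hne0 k (by omega) (by omega) _]
  have hBσ : ((List.ofFn fun j => Pj n r u j (swapWord n r c i j)).drop ((i : ℕ) + 2)).prod
      = B := by
    rw [hB]
    congr 1
    apply List.ext_getElem (by simp)
    intro k h1 h2
    rw [List.getElem_drop, List.getElem_drop, List.getElem_ofFn, List.getElem_ofFn,
      hne0 ((i : ℕ) + 2 + k) (by omega) (by omega) _]
  -- commutation of T with the outer parts
  have hTA : Commute T A := by
    rw [hA]
    refine Commute.list_prod_right _ _ fun x hx => ?_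
    obtain ⟨k, hk, rfl⟩ := List.mem_iff_getElem.mp hx
    have hklt : k < (i : ℕ) := by
      simp only [List.length_take, List.length_ofFn, lt_min_iff] at hk
      exact hk.1
    rw [List.getElem_take, List.getElem_ofFn]
    exact commute_Ti_Pj i (Fin.ne_of_val_ne (by simp [idx0]; omega))
      (Fin.ne_of_val_ne (by simp [idx1]; omega)) _
  have hTB : Commute T B := by
    rw [hB]
    refine Commute.list_prod_right _ _ fun x hx => ?_
    obtain ⟨k, hk, rfl⟩ := List.mem_iff_getElem.mp hx
    rw [List.getElem_drop, List.getElem_ofFn]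
    exact commute_Ti_Pj i (Fin.ne_of_val_ne (by simp [idx0]; omega))
      (Fin.ne_of_val_ne (by simp [idx1]; omega)) _
  -- abbreviations for the two colors
  set a := c (idx0 n i) with ha
  set b := c (idx1 n i) with hb
  have hel : ∀ (w : Fin n → Fin r) (x y : Fin r),
      Pj n r u (idx0 n i) x * (Pj n r u (idx1 n i) y *
        ((List.ofFn fun j => Pj n r u j (w j)).drop ((i : ℕ) + 2)).prod)
      = el n r u i x y *
        ((List.ofFn fun j => Pj n r u j (w j)).drop ((i : ℕ) + 2)).prod :=
    fun w x y => (mul_assoc _ _ _).symm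
  have hLc : Lc n r u 0 c = A * (el n r u i a b * B) := by
    rw [hdec c, hel c a b]
  have hswap0 : swapWord n r c i (idx0 n i) = b := by
    simp only [swapWord, Function.comp_apply, Equiv.swap_apply_left, hb]
  have hswap1 : swapWord n r c i (idx1 n i) = a := by
    simp only [swapWord, Function.comp_apply, Equiv.swap_apply_right, ha]
  have hLσ : Lc n r u 0 (swapWord n r c i) = A * (el n r u i b a * B) := by
    rw [hdec (swapWord n r c i), hel (swapWord n r c i), hswap0, hswap1, hAσ, hBσ]
  have hmove : ∀ Z : AKSAlg n r u 0, T * (A * Z) = A * (T * Z) := fun Z => by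
    rw [← mul_assoc, hTA.eq, mul_assoc]
  refine ⟨fun hlt => ?_, fun heq => ?_, fun hgt => ?_⟩
  · -- a < b
    calc T * Lc n r u 0 c = A * (T * (el n r u i a b * B)) := by rw [hLc, hmove]
      _ = A * ((T * el n r u i a b) * B) := by
          rw [← mul_assoc T (el n r u i a b) B]
      _ = A * ((el n r u i b a * T - el n r u i a b) * B) := by
          rw [Ti_el_of_lt hu hr i hlt]
      _ = A * (el n r u i b a * (B * T)) - A * (el n r u i a b * B) := by
          rw [sub_mul, mul_sub, mul_assoc, hTB.eq]
      _ = (A * (el n r u i b a * B)) * T - A * (el n r u i a b * B) := by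
          rw [← mul_assoc (el n r u i b a) B T, ← mul_assoc A (el n r u i b a * B) T]
      _ = Lc n r u 0 (swapWord n r c i) * T - Lc n r u 0 c := by rw [hLσ, hLc]
  · -- a = b
    calc T * Lc n r u 0 c = A * (T * (el n r u i a b * B)) := by rw [hLc, hmove]
      _ = A * ((T * el n r u i a b) * B) := by
          rw [← mul_assoc T (el n r u i a b) B]
      _ = A * ((el n r u i a b * T) * B) := by
          rw [← heq, Ti_el_of_eq hu hr i a]
      _ = A * (el n r u i a b * (B * T)) := by rw [mul_assoc, hTB.eq]
      _ = Lc n r u 0 c * T := by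
          rw [← mul_assoc (el n r u i a b) B T, ← mul_assoc A (el n r u i a b * B) T, hLc]
  · -- b < a
    calc T * Lc n r u 0 c = A * (T * (el n r u i a b * B)) := by rw [hLc, hmove]
      _ = A * ((T * el n r u i a b) * B) := by
          rw [← mul_assoc T (el n r u i a b) B]
      _ = A * ((el n r u i b a * T + el n r u i b a) * B) := by
          rw [Ti_el_of_gt hu hr i hgt]
      _ = A * (el n r u i b a * (B * T)) + A * (el n r u i b a * B) := by
          rw [add_mul, mul_add, mul_assoc, hTB.eq]
      _ = (A * (el n r u i b a * B)) * T + A * (el n r u i b a * B) := by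
          rw [← mul_assoc (el n r u i b a) B T, ← mul_assoc A (el n r u i b a * B) T]
      _ = Lc n r u 0 (swapWord n r c i) * T + Lc n r u 0 (swapWord n r c i) := by rw [hLσ]

end AKS0
end
end

section
/- A ℂ-algebra homomorphism χ : H_{n,r}(0) → ℂ exists with prescribed values χ(ξ_j) and χ(T_i) if and only if there are a color word c ∈ C^n and scalars t_1,…,t_{n−1} ∈ {0,−1} such that χ(ξ_j) = u_{c_j} for all j, χ(T_i) = t_i for all i, and for every i: t_i = −1 whenever c_i < c_{i+1}, and t_i = 0 whenever c_i > c_{i+1} (t_i unconstrained in {0,−1} when c_i = c_{i+1}). Moreover distinct such pairs (c,t) define distinct homomorphisms, so the algebra homomorphisms H_{n,r}(0) → ℂ are in bijection with these pairs (c,t). -/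
noncomputable section

open Polynomial

namespace AKS0

/-- A pair `(c, t)` of a color word and eigenvalues for the `T_i` is admissible if
`t_i ∈ {0, −1}`, `t_i = −1` whenever `c_i < c_{i+1}`, and `t_i = 0` whenever
`c_i > c_{i+1}`. -/
def Admissible (n r : ℕ) (c : Fin n → Fin r) (t : Fin (n - 1) → ℂ) : Prop :=
  (∀ i, t i = 0 ∨ t i = -1) ∧
    ∀ i : Fin (n - 1),
      (c (idx0 n i) < c (idx1 n i) → t i = -1) ∧
      (c (idx1 n i) < c (idx0 n i) → t i = 0)

lemma lagPoly_aeval (r : ℕ) (u : Fin r → ℂ) (hu : Function.Injective u) (m k : Fin r) :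
    Polynomial.aeval (u m) (lagPoly r u k) = if m = k then 1 else 0 := by
  unfold lagPoly
  rw [map_prod]
  by_cases h : m = k
  · subst h
    rw [if_pos rfl]
    apply Finset.prod_eq_one
    intro l hl
    have hne : u m - u l ≠ 0 :=
      sub_ne_zero.mpr fun h => (Finset.mem_erase.mp hl).1 (hu h).symm
    simp [inv_mul_cancel₀ hne]
  · rw [if_neg h]
    apply Finset.prod_eq_zero (Finset.mem_erase.mpr ⟨h, Finset.mem_univ m⟩)
    simp

lemma sumS (r : ℕ) (u : Fin r → ℂ) (hu : Function.Injective u) (a b : Fin r) :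
    ∑ p ∈ Finset.univ.filter (fun p : Fin r × Fin r => p.1 < p.2),
      (u p.2 - u p.1) •
        (Polynomial.aeval (u a) (lagPoly r u p.1) *
          Polynomial.aeval (u b) (lagPoly r u p.2))
    = if a < b then u b - u a else 0 := by
  have hterm : ∀ p : Fin r × Fin r,
      (u p.2 - u p.1) • (Polynomial.aeval (u a) (lagPoly r u p.1) *
        Polynomial.aeval (u b) (lagPoly r u p.2))
      = (u p.2 - u p.1) * ((if a = p.1 then 1 else 0) * (if b = p.2 then 1 else 0)) := by
    intro p
    rw [lagPoly_aeval r u hu a p.1, lagPoly_aeval r u hu b p.2, smul_eq_mul]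
  rw [Finset.sum_congr rfl fun p _ => hterm p]
  by_cases hab : a < b
  · rw [if_pos hab, Finset.sum_eq_single_of_mem (a, b) (by simp [hab])]
    · simp
    · intro p hp hne
      by_cases h1 : a = p.1
      · by_cases h2 : b = p.2
        · exact absurd (Prod.ext_iff.mpr ⟨h1.symm, h2.symm⟩) hne
        · simp [h2]
      · simp [h1]
  · rw [if_neg hab]
    apply Finset.sum_eq_zero
    intro p hp
    by_cases h1 : a = p.1
    · by_cases h2 : b = p.2
      · exfalso; apply hab; rw [h1, h2]; exact (Finset.mem_filter.mp hp).2
      · simp [h2]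
    · simp [h1]

/-- The evaluation of generators determined by a pair `(c, t)`. -/
def evFun (n r : ℕ) (u : Fin r → ℂ) (c : Fin n → Fin r) (t : Fin (n - 1) → ℂ) :
    Gen n → ℂ
  | Sum.inl i => t i
  | Sum.inr j => u (c j)

lemma rel_preserved (n r : ℕ) (u : Fin r → ℂ) (hu : Function.Injective u)
    (c : Fin n → Fin r) (t : Fin (n - 1) → ℂ) (hAdm : Admissible n r c t) :
    ∀ ⦃x y : FreeAKS n⦄, Rel n r u 0 x y →
      FreeAlgebra.lift ℂ (evFun n r u c t) x = FreeAlgebra.lift ℂ (evFun n r u c t) y := by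
  intro x y h
  set φ := FreeAlgebra.lift ℂ (evFun n r u c t) with hφ
  have hT : ∀ i, φ (tGen n i) = t i := fun i => FreeAlgebra.lift_ι_apply _ _
  have hX : ∀ j, φ (xGen n j) = u (c j) := fun j => FreeAlgebra.lift_ι_apply _ _
  have hXp : ∀ (j : Fin n) (p : ℂ[X]),
      φ (Polynomial.aeval (xGen n j) p) = Polynomial.aeval (u (c j)) p := by
    intro j p
    rw [← hX j, Polynomial.aeval_algHom_apply]
  induction h with
  | quad i =>
      simp only [map_mul, map_sub, map_add, map_one, map_zero, hT]
      rcases hAdm.1 i with h0 | h0 <;> rw [h0] <;> ring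
  | braid i j h =>
      simp only [map_mul, hT]
      rcases hAdm.1 i with h0 | h0 <;> rcases hAdm.1 j with h1 | h1 <;>
        rw [h0, h1] <;> ring
  | commTT i j h =>
      simp only [map_mul, hT]
      rcases hAdm.1 i with h0 | h0 <;> rcases hAdm.1 j with h1 | h1 <;>
        rw [h0, h1] <;> ring
  | xPoly j =>
      rw [hXp, map_zero, map_prod]
      apply Finset.prod_eq_zero (Finset.mem_univ (c j))
      simp
  | commXX i j => simp only [map_mul, hX]; ring
  | cross i =>
      have hsum : φ (∑ p ∈ Finset.univ.filter (fun p : Fin r × Fin r => p.1 < p.2),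
            (u p.2 - u p.1) •
              (Polynomial.aeval (xGen n (idx0 n i)) (lagPoly r u p.1) *
                Polynomial.aeval (xGen n (idx1 n i)) (lagPoly r u p.2)))
          = if c (idx0 n i) < c (idx1 n i)
            then u (c (idx1 n i)) - u (c (idx0 n i)) else 0 := by
        rw [map_sum, ← sumS r u hu (c (idx0 n i)) (c (idx1 n i))]
        refine Finset.sum_congr rfl fun p _ => ?_
        rw [map_smul, map_mul, hXp, hXp]
      simp only [map_mul, map_sub, map_smul, hT, hX, hsum]
      rcases lt_trichotomy (c (idx0 n i)) (c (idx1 n i)) with hlt | heq | hgt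
      · rw [if_pos hlt, (hAdm.2 i).1 hlt]
        simp only [smul_eq_mul]; ring
      · rw [if_neg (by simp [heq]), heq]
        simp only [smul_eq_mul]; ring
      · rw [if_neg (asymm hgt), (hAdm.2 i).2 hgt]
        simp only [smul_eq_mul]; ring
  | sumComm i => simp only [map_mul, map_add, hT, hX]; ring
  | commTX i j h h' => simp only [map_mul, hT, hX]; ring

/-- The character attached to an admissible pair. -/
def chiOf (n r : ℕ) (u : Fin r → ℂ) (hu : Function.Injective u)
    (c : Fin n → Fin r) (t : Fin (n - 1) → ℂ) (hAdm : Admissible n r c t) :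
    AKSAlg n r u 0 →ₐ[ℂ] ℂ :=
  RingQuot.liftAlgHom ℂ
    ⟨FreeAlgebra.lift ℂ (evFun n r u c t), rel_preserved n r u hu c t hAdm⟩

lemma chiOf_Xi (n r : ℕ) (u : Fin r → ℂ) (hu : Function.Injective u)
    (c : Fin n → Fin r) (t : Fin (n - 1) → ℂ) (hAdm : Admissible n r c t) (j : Fin n) :
    chiOf n r u hu c t hAdm (Xi n r u 0 j) = u (c j) := by
  unfold chiOf Xi
  rw [RingQuot.liftAlgHom_mkAlgHom_apply]
  exact FreeAlgebra.lift_ι_apply _ _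

lemma chiOf_Ti (n r : ℕ) (u : Fin r → ℂ) (hu : Function.Injective u)
    (c : Fin n → Fin r) (t : Fin (n - 1) → ℂ) (hAdm : Admissible n r c t)
    (i : Fin (n - 1)) :
    chiOf n r u hu c t hAdm (Ti n r u 0 i) = t i := by
  unfold chiOf Ti
  rw [RingQuot.liftAlgHom_mkAlgHom_apply]
  exact FreeAlgebra.lift_ι_apply _ _

lemma aks_hom_ext (n r : ℕ) (u : Fin r → ℂ) (q : ℂ)
    (χ₁ χ₂ : AKSAlg n r u q →ₐ[ℂ] ℂ)
    (hX : ∀ j, χ₁ (Xi n r u q j) = χ₂ (Xi n r u q j))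
    (hT : ∀ i, χ₁ (Ti n r u q i) = χ₂ (Ti n r u q i)) : χ₁ = χ₂ := by
  have key : χ₁.comp (RingQuot.mkAlgHom ℂ (Rel n r u q))
      = χ₂.comp (RingQuot.mkAlgHom ℂ (Rel n r u q)) := by
    apply FreeAlgebra.hom_ext
    funext g
    cases g with
    | inl i => exact hT i
    | inr j => exact hX j
  apply AlgHom.ext
  intro x
  obtain ⟨y, rfl⟩ := RingQuot.mkAlgHom_surjective ℂ (Rel n r u q) x
  exact congrArg (fun ψ : FreeAKS n →ₐ[ℂ] ℂ => ψ y) key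


/-- a `ℂ`-algebra homomorphism `χ : H_{n,r}(0) → ℂ` with prescribed values
on the generators exists iff those values come from an admissible pair `(c, t)` (and then
it is unique), every `χ` arises this way, and distinct admissible pairs give distinct
homomorphisms. -/
theorem algHom_classification (n r : ℕ) (hn : 1 ≤ n) (hr : 1 ≤ r)
    (u : Fin r → ℂ) (hu : Function.Injective u) :
    (∀ (f : Fin n → ℂ) (g : Fin (n - 1) → ℂ),
      (∃ χ : AKSAlg n r u 0 →ₐ[ℂ] ℂ, (∀ j, χ (Xi n r u 0 j) = f j) ∧
          (∀ i, χ (Ti n r u 0 i) = g i)) ↔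
        (∃ (c : Fin n → Fin r) (t : Fin (n - 1) → ℂ), Admissible n r c t ∧
          (∀ j, f j = u (c j)) ∧ (∀ i, g i = t i))) ∧
    (∀ (c : Fin n → Fin r) (t : Fin (n - 1) → ℂ), Admissible n r c t →
      ∃! χ : AKSAlg n r u 0 →ₐ[ℂ] ℂ,
        (∀ j, χ (Xi n r u 0 j) = u (c j)) ∧ (∀ i, χ (Ti n r u 0 i) = t i)) ∧
    (∀ (c c' : Fin n → Fin r) (t t' : Fin (n - 1) → ℂ),
      Admissible n r c t → Admissible n r c' t' →
      ∀ χ : AKSAlg n r u 0 →ₐ[ℂ] ℂ,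
        (∀ j, χ (Xi n r u 0 j) = u (c j)) → (∀ i, χ (Ti n r u 0 i) = t i) →
        (∀ j, χ (Xi n r u 0 j) = u (c' j)) → (∀ i, χ (Ti n r u 0 i) = t' i) →
        c = c' ∧ t = t') := by
  have exU : ∀ (c : Fin n → Fin r) (t : Fin (n - 1) → ℂ), Admissible n r c t →
      ∃! χ : AKSAlg n r u 0 →ₐ[ℂ] ℂ,
        (∀ j, χ (Xi n r u 0 j) = u (c j)) ∧ (∀ i, χ (Ti n r u 0 i) = t i) := by
    intro c t hAdm
    refine ⟨chiOf n r u hu c t hAdm,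
      ⟨fun j => chiOf_Xi n r u hu c t hAdm j, fun i => chiOf_Ti n r u hu c t hAdm i⟩, ?_⟩
    intro χ hχ
    exact aks_hom_ext n r u 0 χ _
      (fun j => by rw [hχ.1 j, chiOf_Xi])
      (fun i => by rw [hχ.2 i, chiOf_Ti])
  refine ⟨?_, exU, ?_⟩
  · intro f g
    constructor
    · rintro ⟨χ, hXf, hTg⟩
      set φ := χ.comp (RingQuot.mkAlgHom ℂ (Rel n r u 0)) with hφdef
      have hφX : ∀ j, φ (xGen n j) = f j := fun j => hXf j
      have hφT : ∀ i, φ (tGen n i) = g i := fun i => hTg i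
      have hrelφ : ∀ {x y : FreeAKS n}, Rel n r u 0 x y → φ x = φ y := by
        intro x y h
        simp only [hφdef, AlgHom.comp_apply]
        exact congrArg χ (RingQuot.mkAlgHom_rel ℂ h)
      have hφXp : ∀ (j : Fin n) (p : ℂ[X]),
          φ (Polynomial.aeval (xGen n j) p) = Polynomial.aeval (f j) p := by
        intro j p
        rw [← hφX j, Polynomial.aeval_algHom_apply]
      have hc : ∀ j, ∃ k, f j = u k := by
        intro j
        have h0 := hrelφ (Rel.xPoly j)
        rw [hφXp, map_zero, map_prod] at h0
        simp only [map_sub, Polynomial.aeval_X, Polynomial.aeval_C,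
          Algebra.algebraMap_self_apply] at h0
        obtain ⟨k, -, hk⟩ := Finset.prod_eq_zero_iff.mp h0
        exact ⟨k, sub_eq_zero.mp hk⟩
      choose c hfc using hc
      have hg01 : ∀ i, g i = 0 ∨ g i = -1 := by
        intro i
        have h1 := hrelφ (Rel.quad i)
        simp only [map_mul, map_sub, map_add, map_one, map_zero, hφT] at h1
        rcases mul_eq_zero.mp h1 with h | h
        · left; simpa using h
        · right; exact eq_neg_of_add_eq_zero_left h
      have hcross : ∀ i : Fin (n - 1),
          g i * u (c (idx0 n i)) = u (c (idx1 n i)) * g i -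
            ((0 : ℂ) - 1) * (if c (idx0 n i) < c (idx1 n i)
              then u (c (idx1 n i)) - u (c (idx0 n i)) else 0) := by
        intro i
        have h2 := hrelφ (Rel.cross i)
        have hsum : φ (∑ p ∈ Finset.univ.filter (fun p : Fin r × Fin r => p.1 < p.2),
              (u p.2 - u p.1) •
                (Polynomial.aeval (xGen n (idx0 n i)) (lagPoly r u p.1) *
                  Polynomial.aeval (xGen n (idx1 n i)) (lagPoly r u p.2)))
            = if c (idx0 n i) < c (idx1 n i)
              then u (c (idx1 n i)) - u (c (idx0 n i)) else 0 := by
          rw [map_sum, ← sumS r u hu (c (idx0 n i)) (c (idx1 n i))]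
          refine Finset.sum_congr rfl fun p _ => ?_
          rw [map_smul, map_mul, hφXp, hφXp, hfc, hfc]
        simp only [map_mul, map_sub, map_smul, hφT, hφX, hsum, smul_eq_mul,
          hfc] at h2
        exact h2
      refine ⟨c, g, ⟨hg01, ?_⟩, hfc, fun i => rfl⟩
      intro i
      constructor
      · intro hlt
        have h2 := hcross i
        rw [if_pos hlt] at h2
        have hne : u (c (idx0 n i)) - u (c (idx1 n i)) ≠ 0 :=
          sub_ne_zero.mpr fun hE => absurd (hu hE) (ne_of_lt hlt)
        have h3 : (g i + 1) * (u (c (idx0 n i)) - u (c (idx1 n i))) = 0 := by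
          linear_combination h2
        rcases mul_eq_zero.mp h3 with h | h
        · exact eq_neg_of_add_eq_zero_left h
        · exact absurd h hne
      · intro hgt
        have h2 := hcross i
        rw [if_neg (asymm hgt)] at h2
        have hne : u (c (idx0 n i)) - u (c (idx1 n i)) ≠ 0 :=
          sub_ne_zero.mpr fun hE => absurd (hu hE) (ne_of_gt hgt)
        have h3 : g i * (u (c (idx0 n i)) - u (c (idx1 n i))) = 0 := by
          linear_combination h2
        rcases mul_eq_zero.mp h3 with h | h
        · exact h
        · exact absurd h hne
    · rintro ⟨c, t, hAdm, hfc, hgt⟩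
      obtain ⟨χ, hχ, -⟩ := exU c t hAdm
      exact ⟨χ, fun j => by rw [hχ.1 j, hfc j], fun i => by rw [hχ.2 i, hgt i]⟩
  · intro c c' t t' _ _ χ hX1 hT1 hX2 hT2
    constructor
    · funext j
      exact hu (by rw [← hX1 j, hX2 j])
    · funext i
      rw [← hT1 i, hT2 i]

end AKS0
end
end

section
/- The map sending a cycloribbon (c,D) of size n to the ℂ-algebra homomorphism χ_{(c,D)} : H_{n,r}(0) → ℂ determined by χ_{(c,D)}(ξ_j) = u_{c_j} for all 1 ≤ j ≤ n and χ_{(c,D)}(T_i) = −1 if i belongs to the descent set D′ of φ(c,D) and χ_{(c,D)}(T_i) = 0 otherwise, is a well-defined bijection from the set of cycloribbons of size n with colors in {1,…,r} onto the set of all ℂ-algebra homomorphisms H_{n,r}(0) → ℂ. -/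
noncomputable section

open Polynomial

namespace AKS0

/-- A colored ribbon of size `n` with colors in `{1,…,r}`: a color word together with the
descent set of the underlying composition. -/
abbrev ColoredRibbon (n r : ℕ) : Type := (Fin n → Fin r) × Finset (Fin (n - 1))

/-- Cycloribbon: weakly increasing in rows, weakly decreasing in columns. -/
def IsCycloribbon (n r : ℕ) (p : ColoredRibbon n r) : Prop :=
  ∀ i : Fin (n - 1),
    (i ∉ p.2 → p.1 (idx0 n i) ≤ p.1 (idx1 n i)) ∧
    (i ∈ p.2 → p.1 (idx1 n i) ≤ p.1 (idx0 n i))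

/-- The involution `φ`: keep the colors, and take the symmetric difference of the descent
set with the set of positions where the color changes. -/
def phi (n r : ℕ) (p : ColoredRibbon n r) : ColoredRibbon n r :=
  (p.1, symmDiff p.2 (Finset.univ.filter fun i : Fin (n - 1) => p.1 (idx0 n i) ≠ p.1 (idx1 n i)))

/-- `χ` is the character attached to the cycloribbon `p`: `χ(ξ_j) = u_{c_j}` and
`χ(T_i) = −1` if `i` is a descent of `φ(p)`, `χ(T_i) = 0` otherwise. -/
def CharSpec (n r : ℕ) (u : Fin r → ℂ) (p : ColoredRibbon n r)
    (χ : AKSAlg n r u 0 →ₐ[ℂ] ℂ) : Prop :=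
  (∀ j, χ (Xi n r u 0 j) = u (p.1 j)) ∧
    ∀ i : Fin (n - 1), χ (Ti n r u 0 i) = if i ∈ (phi n r p).2 then -1 else 0


/-! ### Auxiliary lemmas -/

section Aux

variable {n r : ℕ} {u : Fin r → ℂ}

lemma lag_eval (hu : Function.Injective u) (a k : Fin r) :
    (lagPoly r u a).eval (u k) = if a = k then 1 else 0 := by
  unfold lagPoly
  rw [Polynomial.eval_prod]
  by_cases h : a = k
  · subst h
    rw [if_pos rfl, Finset.prod_congr rfl (fun l hl => ?_), Finset.prod_const_one]
    have hl' : l ≠ a := Finset.ne_of_mem_erase hl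
    have hz : u a - u l ≠ 0 := sub_ne_zero.2 fun e => hl' (hu e).symm
    simp [inv_mul_cancel₀ hz]
  · rw [if_neg h]
    apply Finset.prod_eq_zero (i := k) (by simp [Ne.symm h])
    simp

lemma crossSum (hu : Function.Injective u) (a b : Fin r) :
    ∑ p ∈ Finset.univ.filter (fun p : Fin r × Fin r => p.1 < p.2),
      (u p.2 - u p.1) • ((lagPoly r u p.1).eval (u a) * (lagPoly r u p.2).eval (u b))
      = if a < b then u b - u a else 0 := by
  rw [Finset.sum_congr rfl (fun p _ =>
    (show (u p.2 - u p.1) • ((lagPoly r u p.1).eval (u a) * (lagPoly r u p.2).eval (u b))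
        = if p = (a, b) then u b - u a else 0 from ?_)), Finset.sum_ite_eq' _ (a, b) _]
  · simp
  · by_cases h : p = (a, b)
    · subst h; simp [lag_eval hu, smul_eq_mul]
    · rw [if_neg h]
      have h' : p.1 ≠ a ∨ p.2 ≠ b := by
        by_contra hc; push_neg at hc; exact h (Prod.ext hc.1 hc.2)
      rcases h' with h1 | h2
      · rw [lag_eval hu, if_neg h1]; simp
      · rw [lag_eval hu (p.2) b, if_neg h2]; simp

lemma f_aeval (f : FreeAKS n →ₐ[ℂ] ℂ) (x : FreeAKS n) (P : ℂ[X]) :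
    f (Polynomial.aeval x P) = P.eval (f x) := by
  rw [← Polynomial.aeval_algHom_apply]
  exact congrFun (Polynomial.coe_aeval_eq_eval (f x)) P

/-- Consequences of the relations for any character. -/
lemma rel_consequences (hu : Function.Injective u) (f : FreeAKS n →ₐ[ℂ] ℂ)
    (hf : ∀ x y, Rel n r u 0 x y → f x = f y) :
    (∀ i, f (tGen n i) = 0 ∨ f (tGen n i) = -1) ∧
    (∀ j, ∃ k, f (xGen n j) = u k) ∧
    (∀ i a b, f (xGen n (idx0 n i)) = u a → f (xGen n (idx1 n i)) = u b →
      f (tGen n i) * u a = u b * f (tGen n i) + (if a < b then u b - u a else 0)) := by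
  refine ⟨fun i => ?_, fun j => ?_, fun i a b ha hb => ?_⟩
  · have h := hf _ _ (Rel.quad (u := u) i)
    simp only [map_mul, map_sub, map_add, map_one, map_zero, AlgHom.commutes,
      Complex.coe_algebraMap] at h
    have h' : (f (tGen n i)) * (f (tGen n i) + 1) = 0 := by
      rw [← h]; ring
    rcases mul_eq_zero.1 h' with h0 | h1
    · exact Or.inl h0
    · exact Or.inr (by linear_combination h1)
  · have h := hf _ _ (Rel.xPoly (u := u) (q := 0) j)
    rw [f_aeval, map_zero, Polynomial.eval_prod] at h
    obtain ⟨k, -, hk⟩ := Finset.prod_eq_zero_iff.1 h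
    simp only [Polynomial.eval_sub, Polynomial.eval_X, Polynomial.eval_C] at hk
    exact ⟨k, sub_eq_zero.1 hk⟩
  · have h := hf _ _ (Rel.cross (u := u) (q := 0) i)
    rw [map_mul, map_sub, map_mul, map_smul, map_sum] at h
    rw [Finset.sum_congr rfl (fun p _ => by
      rw [map_smul, map_mul, f_aeval, f_aeval, ha, hb])] at h
    rw [ha, hb, crossSum hu] at h
    rw [h]; rw [smul_eq_mul]; split <;> ring

/-- The relations hold for a scalar assignment satisfying the key identities. -/
lemma rel_holds (hu : Function.Injective u) (f : FreeAKS n →ₐ[ℂ] ℂ) (c : Fin n → Fin r)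
    (hx : ∀ j, f (xGen n j) = u (c j))
    (ht : ∀ i, f (tGen n i) = 0 ∨ f (tGen n i) = -1)
    (hc : ∀ i, f (tGen n i) * u (c (idx0 n i)) = u (c (idx1 n i)) * f (tGen n i)
         + (if c (idx0 n i) < c (idx1 n i) then u (c (idx1 n i)) - u (c (idx0 n i)) else 0)) :
    ∀ x y, Rel n r u 0 x y → f x = f y := by
  intro x y h
  induction h with
  | quad i =>
      rcases ht i with h0 | h0 <;>
        simp [map_mul, map_sub, map_add, h0]
  | braid i j _ =>
      rcases ht i with hi | hi <;> rcases ht j with hj | hj <;>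
        simp only [map_mul, hi, hj] <;> ring
  | commTT i j _ => simp only [map_mul]; ring
  | xPoly j =>
      rw [f_aeval, map_zero, hx, Polynomial.eval_prod]
      exact Finset.prod_eq_zero (Finset.mem_univ (c j)) (by simp)
  | commXX i j => simp only [map_mul]; ring
  | cross i =>
      rw [map_mul, map_sub, map_mul, map_smul, map_sum]
      rw [Finset.sum_congr rfl (fun p _ => by
        rw [map_smul, map_mul, f_aeval, f_aeval, hx, hx])]
      rw [hx, hx, crossSum hu, hc i, smul_eq_mul]
      split <;> ring
  | sumComm i => simp only [map_mul, map_add]; ring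
  | commTX i j _ _ => simp only [map_mul]; ring

/-- Homs out of the quotient agreeing on generators are equal. -/
lemma algHom_ext {q : ℂ} {χ₁ χ₂ : AKSAlg n r u q →ₐ[ℂ] ℂ}
    (hT : ∀ i, χ₁ (Ti n r u q i) = χ₂ (Ti n r u q i))
    (hX : ∀ j, χ₁ (Xi n r u q j) = χ₂ (Xi n r u q j)) : χ₁ = χ₂ := by
  have h : χ₁.comp (RingQuot.mkAlgHom ℂ (Rel n r u q))
      = χ₂.comp (RingQuot.mkAlgHom ℂ (Rel n r u q)) := by
    apply FreeAlgebra.hom_ext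
    funext g
    rcases g with i | j
    · exact hT i
    · exact hX j
  apply AlgHom.ext
  intro x
  obtain ⟨y, rfl⟩ := RingQuot.mkAlgHom_surjective ℂ (Rel n r u q) x
  exact AlgHom.congr_fun h y

end Aux

/-- the map sending a cycloribbon `(c,D)` to the character `χ_{(c,D)}` with
`χ(ξ_j) = u_{c_j}` and `χ(T_i) = −1` or `0` according to whether `i` is a descent of
`φ(c,D)` or not, is a well-defined bijection from cycloribbons of size `n` onto the set of
all `ℂ`-algebra homomorphisms `H_{n,r}(0) → ℂ`. -/
theorem cycloribbon_algHom_bijection (n r : ℕ) (hn : 1 ≤ n) (hr : 1 ≤ r)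
    (u : Fin r → ℂ) (hu : Function.Injective u) :
    (∀ p : ColoredRibbon n r, IsCycloribbon n r p →
      ∃! χ : AKSAlg n r u 0 →ₐ[ℂ] ℂ, CharSpec n r u p χ) ∧
    (∀ χ : AKSAlg n r u 0 →ₐ[ℂ] ℂ,
      ∃! p : ColoredRibbon n r, IsCycloribbon n r p ∧ CharSpec n r u p χ) := by
  constructor
  · -- Part 1: existence and uniqueness of the character of a cycloribbon
    intro p hp
    set f : FreeAKS n →ₐ[ℂ] ℂ := FreeAlgebra.lift ℂ
      (Sum.elim (fun i => if i ∈ (phi n r p).2 then (-1 : ℂ) else 0)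
        (fun j => u (p.1 j))) with hfdef
    have hft : ∀ i, f (tGen n i) = if i ∈ (phi n r p).2 then (-1 : ℂ) else 0 := fun i => by
      simp [hfdef, tGen]
    have hfx : ∀ j, f (xGen n j) = u (p.1 j) := fun j => by
      simp [hfdef, xGen]
    have ht : ∀ i, f (tGen n i) = 0 ∨ f (tGen n i) = -1 := fun i => by
      rw [hft]; split <;> simp
    have hcrs : ∀ i, f (tGen n i) * u (p.1 (idx0 n i)) = u (p.1 (idx1 n i)) * f (tGen n i)
        + (if p.1 (idx0 n i) < p.1 (idx1 n i)
            then u (p.1 (idx1 n i)) - u (p.1 (idx0 n i)) else 0) := by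
      intro i
      rw [hft]
      rcases lt_trichotomy (p.1 (idx0 n i)) (p.1 (idx1 n i)) with h | h | h
      · have hnD : i ∉ p.2 := fun hD => absurd ((hp i).2 hD) (not_le.2 h)
        have hmem : i ∈ (phi n r p).2 := by
          simp only [phi, Finset.mem_symmDiff, Finset.mem_filter, Finset.mem_univ, true_and]
          exact Or.inr ⟨ne_of_lt h, hnD⟩
        rw [if_pos hmem, if_pos h]; ring
      · rw [h, if_neg (lt_irrefl _)]
        split <;> ring
      · have hD : i ∈ p.2 := by
          by_contra hnD; exact absurd ((hp i).1 hnD) (not_le.2 h)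
        have hne : p.1 (idx0 n i) ≠ p.1 (idx1 n i) := ne_of_gt h
        have hmem : i ∉ (phi n r p).2 := by
          simp only [phi, Finset.mem_symmDiff, Finset.mem_filter, Finset.mem_univ, true_and,
            not_or, not_and, not_not]
          exact ⟨fun _ => hne, fun _ => hD⟩
        rw [if_neg hmem, if_neg (asymm h)]; ring
    set χ : AKSAlg n r u 0 →ₐ[ℂ] ℂ :=
      RingQuot.liftAlgHom ℂ ⟨f, fun x y h => rel_holds hu f p.1 hfx ht hcrs x y h⟩ with hχdef
    have hXi : ∀ j, χ (Xi n r u 0 j) = u (p.1 j) := fun j => by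
      rw [hχdef, Xi, RingQuot.liftAlgHom_mkAlgHom_apply]; exact hfx j
    have hTi : ∀ i, χ (Ti n r u 0 i) = if i ∈ (phi n r p).2 then (-1 : ℂ) else 0 := fun i => by
      rw [hχdef, Ti, RingQuot.liftAlgHom_mkAlgHom_apply]; exact hft i
    refine ⟨χ, ⟨hXi, hTi⟩, ?_⟩
    rintro χ' ⟨h1, h2⟩
    exact algHom_ext (fun i => by rw [h2 i, hTi i]) (fun j => by rw [h1 j, hXi j])
  · -- Part 2: every character comes from a unique cycloribbon
    intro χ
    set f : FreeAKS n →ₐ[ℂ] ℂ := χ.comp (RingQuot.mkAlgHom ℂ (Rel n r u 0)) with hfdef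
    have hf : ∀ x y, Rel n r u 0 x y → f x = f y := fun x y h => by
      rw [hfdef]; simp only [AlgHom.comp_apply]
      rw [RingQuot.mkAlgHom_rel ℂ h]
    obtain ⟨ht, hx, hcr⟩ := rel_consequences hu f hf
    choose c hc using hx
    have hfx : ∀ j, χ (Xi n r u 0 j) = f (xGen n j) := fun j => rfl
    have hfT : ∀ i, χ (Ti n r u 0 i) = f (tGen n i) := fun i => rfl
    have hlt : ∀ i, c (idx0 n i) < c (idx1 n i) → f (tGen n i) = -1 := by
      intro i h
      have e := hcr i _ _ (hc _) (hc _)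
      rw [if_pos h] at e
      have hd : u (c (idx0 n i)) - u (c (idx1 n i)) ≠ 0 :=
        sub_ne_zero.2 fun e' => absurd (hu e') (ne_of_lt h)
      have e2 : f (tGen n i) * (u (c (idx0 n i)) - u (c (idx1 n i)))
          = (-1) * (u (c (idx0 n i)) - u (c (idx1 n i))) := by linear_combination e
      exact mul_right_cancel₀ hd e2
    have hgt : ∀ i, c (idx1 n i) < c (idx0 n i) → f (tGen n i) = 0 := by
      intro i h
      have e := hcr i _ _ (hc _) (hc _)
      rw [if_neg (asymm h)] at e
      have hd : u (c (idx0 n i)) - u (c (idx1 n i)) ≠ 0 :=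
        sub_ne_zero.2 fun e' => absurd (hu e') (ne_of_gt h)
      have e2 : f (tGen n i) * (u (c (idx0 n i)) - u (c (idx1 n i)))
          = 0 * (u (c (idx0 n i)) - u (c (idx1 n i))) := by linear_combination e
      exact mul_right_cancel₀ hd e2
    set ch : Finset (Fin (n - 1)) :=
      Finset.univ.filter (fun i => c (idx0 n i) ≠ c (idx1 n i)) with hch
    set D' : Finset (Fin (n - 1)) :=
      Finset.univ.filter (fun i => f (tGen n i) = -1) with hD'
    have hphi : (phi n r (c, symmDiff D' ch)).2 = D' := by
      show symmDiff (symmDiff D' ch)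
        (Finset.univ.filter fun i => c (idx0 n i) ≠ c (idx1 n i)) = D'
      rw [← hch]
      exact symmDiff_symmDiff_cancel_right ch D'
    refine ⟨(c, symmDiff D' ch), ⟨?_, ?_, ?_⟩, ?_⟩
    · -- cycloribbon
      intro i
      rcases lt_trichotomy (c (idx0 n i)) (c (idx1 n i)) with h | h | h
      · have hiD : i ∈ D' := Finset.mem_filter.2 ⟨Finset.mem_univ _, hlt i h⟩
        have hic : i ∈ ch := Finset.mem_filter.2 ⟨Finset.mem_univ _, ne_of_lt h⟩
        refine ⟨fun _ => le_of_lt h, fun hmem => absurd hmem ?_⟩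
        intro hmem
        rw [Finset.mem_symmDiff] at hmem
        rcases hmem with ⟨_, hn⟩ | ⟨_, hn⟩
        · exact hn hic
        · exact hn hiD
      · exact ⟨fun _ => le_of_eq h, fun _ => le_of_eq h.symm⟩
      · have hiD : i ∉ D' := by
          intro hmem
          have h1 := (Finset.mem_filter.1 hmem).2
          rw [hgt i h] at h1
          norm_num at h1
        have hic : i ∈ ch := Finset.mem_filter.2 ⟨Finset.mem_univ _, ne_of_gt h⟩
        have hmem : i ∈ symmDiff D' ch :=
          Finset.mem_symmDiff.2 (Or.inr ⟨hic, hiD⟩)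
        exact ⟨fun hn => absurd hmem hn, fun _ => le_of_lt h⟩
    · -- CharSpec: ξ values
      exact fun j => hc j
    · -- CharSpec: T values
      intro i
      rw [hphi, hfT i]
      by_cases hiD : i ∈ D'
      · rw [if_pos hiD]
        exact (Finset.mem_filter.1 hiD).2
      · rw [if_neg hiD]
        rcases ht i with h0 | h1
        · exact h0
        · exact absurd (by rw [hD']; exact Finset.mem_filter.2 ⟨Finset.mem_univ i, h1⟩ : i ∈ D') hiD
    · -- uniqueness of the cycloribbon
      rintro ⟨c', D₂⟩ ⟨hp', hs1, hs2⟩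
      have hcc : c' = c := funext fun j => hu ((hs1 j).symm.trans (hc j))
      subst hcc
      have hphi' : (phi n r (c', D₂)).2 = D' := by
        ext i
        constructor
        · intro hi
          have h1 := hs2 i
          rw [if_pos hi] at h1
          exact Finset.mem_filter.2 ⟨Finset.mem_univ _, h1⟩
        · intro hi
          by_contra hni
          have h1 := hs2 i
          rw [if_neg hni] at h1
          have h2 := (Finset.mem_filter.1 hi).2
          rw [hfT i, h2] at h1
          norm_num at h1
      have hD2 : D₂ = symmDiff D' ch := by
        have h2 : symmDiff (phi n r (c', D₂)).2 ch = D₂ := by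
          show symmDiff (symmDiff D₂
            (Finset.univ.filter fun i => c' (idx0 n i) ≠ c' (idx1 n i))) ch = D₂
          rw [← hch]
          exact symmDiff_symmDiff_cancel_right ch D₂
        rw [hphi'] at h2
        exact h2.symm
      exact Prod.ext rfl hD2

end AKS0
end
end
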